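/- (Existence of uniformly optimal policies, used in the proof of the Value Lemma.) For every horizon n : ℕ there exists a policy π* : ℕ → S → A such that h π* n s = Γ n s for every state s simultaneously (a policy attaining the minimum probability of B's occurrence from every state), and there exists a policy π̄* : ℕ → S → A such that h π̄* n s = Λ n s for every state s simultaneously (a policy attaining the maximum probability of B's occurrence from every state). In particular, the infimum defining Γ n s and the supremum defining Λ n s are attained. -/
import Mathlib


open scoped BigOperators

/-- Shift of a policy: `(shift π) k = π (k+1)`. -/
def shiftPolicy {S A : Type*} (π : ℕ → S → A) : ℕ → S → A := fun k => π (k + 1)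

/-- Hitting probability of `B` within `n` steps from state `s` under policy `π`:
`h π 0 s = (if s ∈ B then 1 else 0)` and
`h π (n+1) s = (if s ∈ B then 1 else ∑ s', (p s (π 0 s) s').toReal * h (shift π) n s')`. -/
noncomputable def hitProb {S A : Type*} [Fintype S]
    (p : S → A → PMF S) (B : Set S) [DecidablePred (· ∈ B)] :
    (ℕ → S → A) → ℕ → S → ℝ
  | _, 0, s => if s ∈ B then 1 else 0
  | π, n + 1, s =>
      if s ∈ B then 1
      else ∑ s', (p s (π 0 s) s').toReal * hitProb p B (shiftPolicy π) n s'

/-- Grit: the infimum over all policies of the hitting probability of `B`. -/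
noncomputable def grit {S A : Type*} [Fintype S]
    (p : S → A → PMF S) (B : Set S) [DecidablePred (· ∈ B)] (n : ℕ) (s : S) : ℝ :=
  ⨅ π : ℕ → S → A, hitProb p B π n s

/-- Reachability: the supremum over all policies of the hitting probability of `B`. -/
noncomputable def reach {S A : Type*} [Fintype S]
    (p : S → A → PMF S) (B : Set S) [DecidablePred (· ∈ B)] (n : ℕ) (s : S) : ℝ :=
  ⨆ π : ℕ → S → A, hitProb p B π n s

section Aux

variable {S A : Type*} [Fintype S] [Fintype A] [Nonempty A]
    (p : S → A → PMF S) (B : Set S) [DecidablePred (· ∈ B)]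

lemma hitProb_nonneg (π : ℕ → S → A) (n : ℕ) (s : S) : 0 ≤ hitProb p B π n s := by
  induction n generalizing π s with
  | zero => rw [hitProb]; split <;> norm_num
  | succ n ih =>
    rw [hitProb]; split
    · exact zero_le_one
    · exact Finset.sum_nonneg fun s' _ => mul_nonneg ENNReal.toReal_nonneg (ih _ _)

lemma sum_pmf_toReal (s : S) (a : A) : ∑ s', ((p s a) s').toReal = 1 := by
  have h := (p s a).tsum_coe
  rw [tsum_fintype] at h
  rw [← ENNReal.toReal_sum fun s' _ => (p s a).apply_ne_top s', h, ENNReal.toReal_one]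

lemma hitProb_le_one (π : ℕ → S → A) (n : ℕ) (s : S) : hitProb p B π n s ≤ 1 := by
  induction n generalizing π s with
  | zero => rw [hitProb]; split <;> norm_num
  | succ n ih =>
    rw [hitProb]; split
    · exact le_refl 1
    · calc ∑ s', ((p s (π 0 s)) s').toReal * hitProb p B (shiftPolicy π) n s'
          ≤ ∑ s', ((p s (π 0 s)) s').toReal * 1 :=
            Finset.sum_le_sum fun s' _ =>
              mul_le_mul_of_nonneg_left (ih _ _) ENNReal.toReal_nonneg
        _ = 1 := by simp [sum_pmf_toReal p s]

lemma grit_bddBelow (n : ℕ) (s : S) :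
    BddBelow (Set.range fun π : ℕ → S → A => hitProb p B π n s) := by
  refine ⟨0, ?_⟩
  rintro x ⟨π, rfl⟩
  exact hitProb_nonneg p B π n s

lemma reach_bddAbove (n : ℕ) (s : S) :
    BddAbove (Set.range fun π : ℕ → S → A => hitProb p B π n s) := by
  refine ⟨1, ?_⟩
  rintro x ⟨π, rfl⟩
  exact hitProb_le_one p B π n s

end Aux

/-- **Existence of uniformly optimal policies.**  For every horizon `n` there is a policy
attaining the grit (minimum hitting probability of `B`) from every state simultaneously, and a
policy attaining the reachability (maximum hitting probability of `B`) from every state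
simultaneously; in particular the infimum defining `Γ n s` and the supremum defining `Λ n s`
are attained. -/
theorem exists_uniformly_optimal_policy {S A : Type*} [Fintype S] [Nonempty S]
    [Fintype A] [Nonempty A]
    (p : S → A → PMF S) (B : Set S) [DecidablePred (· ∈ B)] (n : ℕ) :
    (∃ πstar : ℕ → S → A, ∀ s : S, hitProb p B πstar n s = grit p B n s) ∧
    (∃ πbar : ℕ → S → A, ∀ s : S, hitProb p B πbar n s = reach p B n s) := by
  induction n with
  | zero =>
    have hconst : ∀ (π : ℕ → S → A) (s : S),
        hitProb p B π 0 s = (if s ∈ B then 1 else 0) := fun π s => by rw [hitProb]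
    constructor
    · refine ⟨fun _ _ => Classical.arbitrary A, fun s => ?_⟩
      unfold grit
      simp only [hconst]
      rw [ciInf_const]
    · refine ⟨fun _ _ => Classical.arbitrary A, fun s => ?_⟩
      unfold reach
      simp only [hconst]
      rw [ciSup_const]
  | succ n ih =>
    obtain ⟨⟨π', hπ'⟩, ⟨πb, hπb⟩⟩ := ih
    constructor
    · -- grit part
      set f : S → A → ℝ := fun s a => ∑ s', ((p s a) s').toReal * hitProb p B π' n s' with hf
      have hmin : ∀ s : S, ∃ a : A, ∀ b : A, f s a ≤ f s b := fun s => by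
        obtain ⟨a, -, ha⟩ := Finset.exists_min_image Finset.univ (f s)
          ⟨Classical.arbitrary A, Finset.mem_univ _⟩
        exact ⟨a, fun b => ha b (Finset.mem_univ b)⟩
      choose a0 ha0 using hmin
      set πs : ℕ → S → A := fun k => match k with | 0 => a0 | (k + 1) => π' k with hπs
      have hshift : shiftPolicy πs = π' := rfl
      have key : ∀ (π : ℕ → S → A) (s : S),
          hitProb p B πs (n + 1) s ≤ hitProb p B π (n + 1) s := by
        intro π s
        rw [hitProb, hitProb]
        split
        · exact le_refl 1
        · have h1 : ∀ s', hitProb p B π' n s' ≤ hitProb p B (shiftPolicy π) n s' := by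
            intro s'
            rw [hπ' s']
            exact ciInf_le (grit_bddBelow p B n s') (shiftPolicy π)
          calc ∑ s', ((p s (πs 0 s)) s').toReal * hitProb p B (shiftPolicy πs) n s'
              = f s (a0 s) := by rw [hshift]
            _ ≤ f s (π 0 s) := ha0 s (π 0 s)
            _ ≤ ∑ s', ((p s (π 0 s)) s').toReal * hitProb p B (shiftPolicy π) n s' :=
                Finset.sum_le_sum fun s' _ =>
                  mul_le_mul_of_nonneg_left (h1 s') ENNReal.toReal_nonneg
      refine ⟨πs, fun s => le_antisymm ?_ ?_⟩
      · exact le_ciInf fun π => key π s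
      · exact ciInf_le (grit_bddBelow p B (n + 1) s) πs
    · -- reach part
      set f : S → A → ℝ := fun s a => ∑ s', ((p s a) s').toReal * hitProb p B πb n s' with hf
      have hmax : ∀ s : S, ∃ a : A, ∀ b : A, f s b ≤ f s a := fun s => by
        obtain ⟨a, -, ha⟩ := Finset.exists_max_image Finset.univ (f s)
          ⟨Classical.arbitrary A, Finset.mem_univ _⟩
        exact ⟨a, fun b => ha b (Finset.mem_univ b)⟩
      choose a0 ha0 using hmax
      set πs : ℕ → S → A := fun k => match k with | 0 => a0 | (k + 1) => πb k with hπs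
      have hshift : shiftPolicy πs = πb := rfl
      have key : ∀ (π : ℕ → S → A) (s : S),
          hitProb p B π (n + 1) s ≤ hitProb p B πs (n + 1) s := by
        intro π s
        rw [hitProb, hitProb]
        split
        · exact le_refl 1
        · have h1 : ∀ s', hitProb p B (shiftPolicy π) n s' ≤ hitProb p B πb n s' := by
            intro s'
            rw [hπb s']
            exact le_ciSup (reach_bddAbove p B n s') (shiftPolicy π)
          calc ∑ s', ((p s (π 0 s)) s').toReal * hitProb p B (shiftPolicy π) n s'
              ≤ f s (π 0 s) :=
                Finset.sum_le_sum fun s' _ =>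
                  mul_le_mul_of_nonneg_left (h1 s') ENNReal.toReal_nonneg
            _ ≤ f s (a0 s) := ha0 s (π 0 s)
            _ = ∑ s', ((p s (πs 0 s)) s').toReal * hitProb p B (shiftPolicy πs) n s' := by
                rw [hshift]
      refine ⟨πs, fun s => le_antisymm ?_ ?_⟩
      · exact le_ciSup (reach_bddAbove p B (n + 1) s) πs
      · exact ciSup_le fun π => key π s
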